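/- Let q > 1 be real, λ = q − q^{−1}, and let α, β ∈ ℂ satisfy α β̄ = ᾱ β. Then for every complex-valued function f and every real x ≠ 0, the Hamilton operator H = a⁺ a takes the explicit form (a⁺(a f))(x) = |α|² f(x) − |β|² (D_q(D_q f))(x) − i α β̄ ( q^{−1/2} (D_q f)(q^{−1} x) + q^{3/2} (D_q f)(q x) ). -/

import Mathlib

/-- The q-derivative `(D_q f)(x) = (f(qx) - f(q⁻¹x)) / (x(q - q⁻¹))`. -/
noncomputable def Dq (q : ℝ) (f : ℝ → ℂ) (x : ℝ) : ℂ :=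
  (f (q * x) - f (q⁻¹ * x)) / ((x : ℂ) * ((q : ℂ) - (q : ℂ)⁻¹))

/-- The annihilation operator `a = α U⁻² + β U⁻¹ P` of the q-oscillator realized
on the quantum line: `(a f)(x) = α q f(q²x) - i β q^{1/2} (D_q f)(qx)`. -/
noncomputable def aOp (q : ℝ) (α β : ℂ) (f : ℝ → ℂ) (x : ℝ) : ℂ :=
  α * (q : ℂ) * f (q ^ 2 * x) -
    Complex.I * β * ((q ^ ((1 : ℝ) / 2) : ℝ) : ℂ) * Dq q f (q * x)

/-- The creation operator `a⁺ = ᾱ U² + β̄ P U` of the q-oscillator realized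
on the quantum line: `(a⁺ f)(x) = ᾱ q⁻¹ f(q⁻²x) - i β̄ q^{-3/2} (D_q f)(q⁻¹x)`. -/
noncomputable def aPlusOp (q : ℝ) (α β : ℂ) (f : ℝ → ℂ) (x : ℝ) : ℂ :=
  (starRingEnd ℂ) α * (q : ℂ)⁻¹ * f (q⁻¹ ^ 2 * x) -
    Complex.I * (starRingEnd ℂ) β * ((q ^ (-(3 : ℝ) / 2) : ℝ) : ℂ) * Dq q f (q⁻¹ * x)

set_option maxHeartbeats 2000000 in
/-- The Hamilton operator `H = a⁺ a` takes the explicit form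
`H f = |α|² f - |β|² D_q² f - i α β̄ (U + q U⁻¹) D_q f`, i.e. pointwise
`(a⁺(a f))(x) = |α|² f(x) - |β|² (D_q(D_q f))(x)
  - i α β̄ (q^{-1/2} (D_q f)(q⁻¹x) + q^{3/2} (D_q f)(qx))`. -/
theorem hamiltonian_explicit (q : ℝ) (hq : 1 < q) (α β : ℂ)
    (hαβ : α * (starRingEnd ℂ) β = (starRingEnd ℂ) α * β) :
    ∀ (f : ℝ → ℂ) (x : ℝ), x ≠ 0 →
      aPlusOp q α β (aOp q α β f) x =
        (Complex.normSq α : ℂ) * f x - (Complex.normSq β : ℂ) * Dq q (Dq q f) x -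
          Complex.I * α * (starRingEnd ℂ) β *
            (((q ^ (-(1 : ℝ) / 2) : ℝ) : ℂ) * Dq q f (q⁻¹ * x) +
              ((q ^ ((3 : ℝ) / 2) : ℝ) : ℂ) * Dq q f (q * x)) := by
  intro f x hx
  have hq0 : (0:ℝ) < q := lt_trans one_pos hq
  have hqne : q ≠ 0 := ne_of_gt hq0
  have e1 : q ^ 2 * (q⁻¹ ^ 2 * x) = x := by field_simp
  have e2 : q * (q⁻¹ ^ 2 * x) = q⁻¹ * x := by field_simp
  have e3 : q * (q⁻¹ * x) = x := by field_simp
  have e4 : q⁻¹ * (q⁻¹ * x) = q⁻¹ ^ 2 * x := by ring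
  have e5 : q * (q * x) = q ^ 2 * x := by ring
  have e6 : q⁻¹ * (q * x) = x := by field_simp
  have hs0 : (0:ℝ) < q ^ ((1:ℝ)/2) := Real.rpow_pos_of_pos hq0 _
  have hsC : ((q ^ ((1:ℝ)/2) : ℝ) : ℂ) ≠ 0 := by
    exact_mod_cast ne_of_gt hs0
  have r1 : ((q ^ ((1 : ℝ) / 2) : ℝ) : ℂ) * ((q ^ (-(3 : ℝ) / 2) : ℝ) : ℂ) = ((q:ℂ))⁻¹ := by
    rw [← Complex.ofReal_mul, ← Real.rpow_add hq0]
    norm_num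
    rw [Real.rpow_neg_one]
    push_cast [hqne]
    ring
  have ht : ((q ^ (-(3 : ℝ) / 2) : ℝ) : ℂ) = ((q:ℂ))⁻¹ * ((q ^ ((1:ℝ)/2) : ℝ) : ℂ)⁻¹ := by
    rw [← r1]; field_simp
  have r2R : (q ^ (-(1:ℝ)/2) : ℝ) = q ^ (-(3:ℝ)/2) * q := by
    rw [show (-(1:ℝ)/2) = (-(3:ℝ)/2) + 1 by norm_num, Real.rpow_add hq0, Real.rpow_one]
  have r3R : (q ^ ((3:ℝ)/2) : ℝ) = q ^ ((1:ℝ)/2) * q := by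
    rw [show ((3:ℝ)/2) = ((1:ℝ)/2) + 1 by norm_num, Real.rpow_add hq0, Real.rpow_one]
  have r2 : ((q ^ (-(1 : ℝ) / 2) : ℝ) : ℂ) = ((q:ℂ))⁻¹ * ((q ^ ((1:ℝ)/2) : ℝ) : ℂ)⁻¹ * (q:ℂ) := by
    rw [r2R]; push_cast; rw [ht]
  have r3 : ((q ^ ((3 : ℝ) / 2) : ℝ) : ℂ) = ((q ^ ((1:ℝ)/2) : ℝ) : ℂ) * (q:ℂ) := by
    rw [r3R]; push_cast; ring
  have hxC : (x:ℂ) ≠ 0 := by exact_mod_cast hx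
  have hqC : (q:ℂ) ≠ 0 := by exact_mod_cast hqne
  have hdR : (0:ℝ) < q - q⁻¹ := by
    have : q⁻¹ < 1 := by
      rw [inv_lt_one_iff₀]; right; exact hq
    linarith
  have hdC : (q:ℂ) - (q:ℂ)⁻¹ ≠ 0 := by
    have : ((q - q⁻¹ : ℝ) : ℂ) ≠ 0 := by exact_mod_cast ne_of_gt hdR
    push_cast at this
    exact this
  have hss : ((q ^ ((1:ℝ)/2) : ℝ) : ℂ)^2 = (q:ℂ) := by
    have h : (q ^ ((1:ℝ)/2) : ℝ)^(2:ℕ) = q := by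
      rw [← Real.rpow_natCast (q ^ ((1:ℝ)/2)) 2, ← Real.rpow_mul hq0.le]
      norm_num
    exact_mod_cast congrArg (Complex.ofReal) h
  have h21 : (q:ℂ)^2 - 1 ≠ 0 := by
    have h : (q:ℝ)^2 - 1 > 0 := by nlinarith
    have : ((q^2 - 1 : ℝ):ℂ) ≠ 0 := by exact_mod_cast ne_of_gt h
    push_cast at this; exact this
  have hdq : (q:ℂ) - (q:ℂ)⁻¹ = ((q:ℂ)^2 - 1) * (q:ℂ)⁻¹ := by field_simp
  by_cases hβ : β = 0
  · subst hβ
    simp only [aPlusOp, aOp, Dq, e1, e2, e3, e4, e5, e6, map_zero, mul_zero, zero_mul,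
      Complex.normSq_zero, sub_zero, Complex.ofReal_zero]
    rw [Complex.normSq_eq_conj_mul_self]
    field_simp
  · have hcα : (starRingEnd ℂ) α = α * (starRingEnd ℂ) β / β := (eq_div_iff hβ).mpr hαβ.symm
    simp only [aPlusOp, aOp, Dq, e1, e2, e3, e4, e5, e6]
    rw [Complex.normSq_eq_conj_mul_self, Complex.normSq_eq_conj_mul_self,
      ht, r2, r3, hcα]
    push_cast
    simp only [div_eq_mul_inv, mul_inv, inv_inv]
    obtain ⟨e, he⟩ : ∃ e : ℂ, ((q:ℂ) - (q:ℂ)⁻¹)⁻¹ = e := ⟨_, rfl⟩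
    rw [he, ← hss]
    simp only [inv_pow]
    field_simp [hsC, hxC, hβ]
    ring_nf
    field_simp [hsC, hxC, hβ]
    ring_nf
    field_simp [hsC, hxC, hβ]
    ring_nf; simp only [Complex.I_sq]; ring
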